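/- For all real numbers c > 0, θ > 0 and all x ∈ ℝ, ∫_0^∞ (2π c y)^{−1/2} · exp(−x²/(2cy)) · θ·exp(−θ y) dy = √(θ/(2c)) · exp(−|x|·√(2θ/c)). In other words, the mixture of centered normal densities with variance c·y against the exponential density with rate θ is the Laplace density with parameter √(2θ/c). -/

import Mathlib

open MeasureTheory Filter Set

lemma sq_image : (fun u : ℝ => u ^ 2) '' Ioi 0 = Ioi 0 := by
  ext y
  constructor
  · rintro ⟨u, hu, rfl⟩; exact pow_pos (show (0:ℝ) < u from hu) 2
  · intro hy
    exact ⟨Real.sqrt y, Real.sqrt_pos.mpr hy, Real.sq_sqrt (le_of_lt hy)⟩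

lemma div_image (r : ℝ) (hr : 0 < r) : (fun w : ℝ => r / w) '' Ioi 0 = Ioi 0 := by
  ext y
  constructor
  · rintro ⟨u, hu, rfl⟩; exact div_pos hr hu
  · intro hy
    exact ⟨r / y, div_pos hr hy, by field_simp⟩

lemma integrableE {a b : ℝ} (ha : 0 ≤ a) (hb : 0 < b) :
    IntegrableOn (fun u : ℝ => Real.exp (-(a / u ^ 2) - b * u ^ 2)) (Ioi 0) := by
  apply ((integrable_exp_neg_mul_sq hb).integrableOn).mono'
  · apply ContinuousOn.aestronglyMeasurable _ measurableSet_Ioi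
    apply ContinuousOn.rexp
    apply ContinuousOn.sub
    · apply ContinuousOn.neg
      exact continuousOn_const.div (continuousOn_pow 2) (fun u hu => by have : (0:ℝ) < u := hu; positivity)
    · exact (continuousOn_const.mul (continuousOn_pow 2))
  · filter_upwards [self_mem_ae_restrict measurableSet_Ioi] with u hu
    rw [Real.norm_eq_abs, abs_of_pos (Real.exp_pos _)]
    apply Real.exp_le_exp.mpr
    have : 0 ≤ a / u ^ 2 := div_nonneg ha (by positivity)
    linarith

lemma key_te {t : ℝ} (ht : 0 < t) : t * Real.exp (-t) ≤ 1 := by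
  calc t * Real.exp (-t) ≤ Real.exp t * Real.exp (-t) :=
        mul_le_mul_of_nonneg_right (by linarith [Real.add_one_le_exp t]) (Real.exp_pos _).le
    _ = 1 := by rw [← Real.exp_add]; simp

lemma integrableE2 {a b : ℝ} (ha : 0 < a) (hb : 0 < b) :
    IntegrableOn (fun u : ℝ => (Real.sqrt a / u ^ 2) * Real.exp (-(a / u ^ 2) - b * u ^ 2))
      (Ioi 0) := by
  have hsa : 0 < Real.sqrt a := Real.sqrt_pos.mpr ha
  apply (((integrable_exp_neg_mul_sq hb).integrableOn).const_mul (Real.sqrt a)⁻¹).mono'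
  · have hcont : ContinuousOn
        (fun u : ℝ => (Real.sqrt a / u ^ 2) * Real.exp (-(a / u ^ 2) - b * u ^ 2)) (Ioi 0) := by
      apply ContinuousOn.mul
      · exact continuousOn_const.div (continuousOn_pow 2)
          (fun u hu => by have : (0:ℝ) < u := hu; positivity)
      · apply ContinuousOn.rexp
        apply ContinuousOn.sub
        · exact (continuousOn_const.div (continuousOn_pow 2)
            (fun u hu => by have : (0:ℝ) < u := hu; positivity)).neg
        · exact continuousOn_const.mul (continuousOn_pow 2)
    exact hcont.aestronglyMeasurable measurableSet_Ioi
  · filter_upwards [self_mem_ae_restrict measurableSet_Ioi] with u hu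
    have hu' : (0:ℝ) < u := hu
    have hsplit : Real.exp (-(a / u ^ 2) - b * u ^ 2)
        = Real.exp (-(a / u ^ 2)) * Real.exp (-(b * u ^ 2)) := by
      rw [← Real.exp_add]; ring_nf
    rw [Real.norm_eq_abs, abs_of_nonneg (by positivity), hsplit, ← mul_assoc]
    have h1 : Real.sqrt a / u ^ 2 * Real.exp (-(a / u ^ 2)) ≤ (Real.sqrt a)⁻¹ := by
      have heq : Real.sqrt a / u ^ 2 * Real.exp (-(a / u ^ 2))
          = (Real.sqrt a)⁻¹ * (a / u ^ 2 * Real.exp (-(a / u ^ 2))) := by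
        rw [← mul_assoc]
        congr 1
        rw [← Real.mul_self_sqrt ha.le]
        field_simp
        rw [Real.sqrt_sq (Real.sqrt_nonneg _)]
      rw [heq]
      calc (Real.sqrt a)⁻¹ * (a / u ^ 2 * Real.exp (-(a / u ^ 2)))
          ≤ (Real.sqrt a)⁻¹ * 1 :=
            mul_le_mul_of_nonneg_left (key_te (by positivity)) (by positivity)
        _ = (Real.sqrt a)⁻¹ := mul_one _
    calc Real.sqrt a / u ^ 2 * Real.exp (-(a / u ^ 2)) * Real.exp (-(b * u ^ 2))
        ≤ (Real.sqrt a)⁻¹ * Real.exp (-(b * u ^ 2)) :=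
          mul_le_mul_of_nonneg_right h1 (Real.exp_pos _).le
      _ = (Real.sqrt a)⁻¹ * Real.exp (-b * u ^ 2) := by ring_nf

lemma glasser_flip {a b : ℝ} (ha : 0 < a) (hb : 0 < b) :
    ∫ u in Ioi (0:ℝ), (Real.sqrt a / u ^ 2) * Real.exp (-(a / u ^ 2) - b * u ^ 2)
      = Real.sqrt b * ∫ u in Ioi (0:ℝ), Real.exp (-(a / u ^ 2) - b * u ^ 2) := by
  set r := Real.sqrt (a / b) with hrdef
  have hr : 0 < r := Real.sqrt_pos.mpr (div_pos ha hb)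
  have hr2 : r ^ 2 = a / b := Real.sq_sqrt (div_pos ha hb).le
  have hderiv : ∀ w ∈ Ioi (0:ℝ),
      HasDerivWithinAt (fun w : ℝ => r / w) (-(r / w ^ 2)) (Ioi 0) w := by
    intro w hw
    have hw' : (0:ℝ) < w := hw
    have h := ((hasDerivAt_inv hw'.ne').const_mul r).hasDerivWithinAt (s := Ioi (0:ℝ))
    simp only [div_eq_mul_inv]
    simpa only [mul_neg] using h
  have hinj : InjOn (fun w : ℝ => r / w) (Ioi 0) := by
    intro w1 h1 w2 h2 h
    have h1' : (0:ℝ) < w1 := h1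
    have h2' : (0:ℝ) < w2 := h2
    field_simp at h
    linarith
  have := integral_image_eq_integral_abs_deriv_smul measurableSet_Ioi hderiv hinj
    (fun u : ℝ => (Real.sqrt a / u ^ 2) * Real.exp (-(a / u ^ 2) - b * u ^ 2))
  rw [div_image r hr] at this
  rw [this]
  rw [← integral_const_mul]
  apply setIntegral_congr_fun measurableSet_Ioi
  intro w hw
  have hw' : (0:ℝ) < w := hw
  have hb' : Real.sqrt b > 0 := Real.sqrt_pos.mpr hb
  have hab : Real.sqrt a = Real.sqrt b * r := by
    rw [hrdef, Real.sqrt_div ha.le]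
    have h1 : Real.sqrt b ≠ 0 := (Real.sqrt_pos.mpr hb).ne'
    field_simp
  have hw2 : w ^ 2 ≠ 0 := by positivity
  have hA : a / (r / w) ^ 2 = b * w ^ 2 := by
    rw [div_pow, hr2]
    field_simp
  have hB : b * (r / w) ^ 2 = a / w ^ 2 := by
    rw [div_pow, hr2]
    field_simp
  simp only [smul_eq_mul]
  rw [abs_neg, abs_of_pos (by positivity), hA, hB,
    show -(b * w ^ 2) - a / w ^ 2 = -(a / w ^ 2) - b * w ^ 2 from by ring, ← mul_assoc]
  congr 1
  rw [div_pow, hr2, hab]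
  have hr2b : r ^ 2 * b = a := by rw [hr2]; field_simp
  field_simp
  linear_combination hr2b

lemma glasser_image {a b : ℝ} (ha : 0 < a) (hb : 0 < b) :
    (fun u : ℝ => Real.sqrt b * u - Real.sqrt a / u) '' Ioi 0 = univ := by
  have hsb : 0 < Real.sqrt b := Real.sqrt_pos.mpr hb
  have hsab : 0 < Real.sqrt (a * b) := Real.sqrt_pos.mpr (mul_pos ha hb)
  apply eq_univ_of_forall
  intro v
  set s := Real.sqrt (v ^ 2 + 4 * Real.sqrt (a * b)) with hsdef
  have hs2 : s ^ 2 = v ^ 2 + 4 * Real.sqrt (a * b) := Real.sq_sqrt (by positivity)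
  have hs0 : 0 ≤ s := Real.sqrt_nonneg _
  have hvs : -v < s := by nlinarith [abs_nonneg v, sq_abs v, neg_abs_le v]
  have hu : 0 < (v + s) / (2 * Real.sqrt b) := by
    apply div_pos (by linarith) (by positivity)
  refine ⟨(v + s) / (2 * Real.sqrt b), hu, ?_⟩
  have hmul : Real.sqrt a * Real.sqrt b = Real.sqrt (a * b) := (Real.sqrt_mul ha.le b).symm
  have hvs' : v + s ≠ 0 := by linarith
  field_simp
  nlinarith [hs2, hmul]

lemma glasser {a b : ℝ} (ha : 0 ≤ a) (hb : 0 < b) :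
    ∫ u in Ioi (0:ℝ), Real.exp (-(a / u ^ 2) - b * u ^ 2)
      = Real.sqrt (Real.pi / b) / 2 * Real.exp (-(2 * Real.sqrt (a * b))) := by
  rcases eq_or_lt_of_le ha with h0 | ha
  · simp only [← h0, zero_div, neg_zero, zero_sub, zero_mul, Real.sqrt_zero, mul_zero,
      Real.exp_zero, mul_one, ← neg_mul]
    exact integral_gaussian_Ioi b
  · have hsa : 0 < Real.sqrt a := Real.sqrt_pos.mpr ha
    have hsb : 0 < Real.sqrt b := Real.sqrt_pos.mpr hb
    have hmul : Real.sqrt a * Real.sqrt b = Real.sqrt (a * b) := (Real.sqrt_mul ha.le b).symm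
    have hderiv : ∀ u ∈ Ioi (0:ℝ),
        HasDerivWithinAt (fun u : ℝ => Real.sqrt b * u - Real.sqrt a / u)
          (Real.sqrt b + Real.sqrt a / u ^ 2) (Ioi 0) u := by
      intro u hu
      have hu' : (0:ℝ) < u := hu
      have h := (((hasDerivAt_id u).const_mul (Real.sqrt b)).sub
        ((hasDerivAt_inv hu'.ne').const_mul (Real.sqrt a))).hasDerivWithinAt (s := Ioi (0:ℝ))
      simp only [div_eq_mul_inv]
      exact h.congr_deriv (by ring)
    have hinj : InjOn (fun u : ℝ => Real.sqrt b * u - Real.sqrt a / u) (Ioi 0) := by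
      apply StrictMonoOn.injOn
      intro u1 h1 u2 h2 hlt
      have h1' : (0:ℝ) < u1 := h1
      have h2' : (0:ℝ) < u2 := h2
      have e1 : Real.sqrt b * u1 < Real.sqrt b * u2 := by nlinarith
      have e2 : Real.sqrt a / u2 < Real.sqrt a / u1 := by
        apply div_lt_div_of_pos_left hsa h1' hlt
      simp only
      linarith
    have key := integral_image_eq_integral_abs_deriv_smul measurableSet_Ioi hderiv hinj
      (fun v : ℝ => Real.exp (-v ^ 2))
    rw [glasser_image ha hb, Measure.restrict_univ] at key
    have hgauss : (∫ v : ℝ, Real.exp (-v ^ 2)) = Real.sqrt Real.pi := by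
      simpa using integral_gaussian 1
    rw [hgauss] at key
    have hcongr : ∫ u in Ioi (0:ℝ),
        |Real.sqrt b + Real.sqrt a / u ^ 2| •
          Real.exp (-(Real.sqrt b * u - Real.sqrt a / u) ^ 2)
        = ∫ u in Ioi (0:ℝ), Real.exp (2 * Real.sqrt (a * b)) *
            (Real.sqrt b * Real.exp (-(a / u ^ 2) - b * u ^ 2)
              + (Real.sqrt a / u ^ 2) * Real.exp (-(a / u ^ 2) - b * u ^ 2)) := by
      apply setIntegral_congr_fun measurableSet_Ioi
      intro u hu
      have hu' : (0:ℝ) < u := hu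
      have hsq : (Real.sqrt b * u - Real.sqrt a / u) ^ 2
          = b * u ^ 2 + a / u ^ 2 - 2 * Real.sqrt (a * b) := by
        have e1 : Real.sqrt b ^ 2 = b := Real.sq_sqrt hb.le
        have e2 : Real.sqrt a ^ 2 = a := Real.sq_sqrt ha.le
        rw [← hmul]
        field_simp
        linear_combination u ^ 2 * u ^ 2 * e1 + e2
      simp only [smul_eq_mul]
      rw [abs_of_pos (by positivity), hsq,
        show -(b * u ^ 2 + a / u ^ 2 - 2 * Real.sqrt (a * b))
          = (-(a / u ^ 2) - b * u ^ 2) + 2 * Real.sqrt (a * b) from by ring,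
        Real.exp_add]
      ring
    rw [hcongr, integral_const_mul, integral_add
      ((integrableE ha.le hb).const_mul _) (integrableE2 ha hb),
      integral_const_mul, glasser_flip ha hb] at key
    have hepos := Real.exp_pos (2 * Real.sqrt (a * b))
    set I := ∫ u in Ioi (0:ℝ), Real.exp (-(a / u ^ 2) - b * u ^ 2) with hIdef
    rw [Real.sqrt_div Real.pi_pos.le, Real.exp_neg, key]
    field_simp
    ring

/-- mixing centered normal densities of variance `c·y` against an
exponential density with rate `θ` yields the Laplace density with parameter `√(2θ/c)`. -/
theorem stmt_13 (c θ x : ℝ) (hc : 0 < c) (hθ : 0 < θ) :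
    (∫ y in Set.Ioi (0 : ℝ),
        (2 * Real.pi * c * y) ^ (-(1 : ℝ) / 2) * Real.exp (-(x ^ 2) / (2 * c * y)) *
          (θ * Real.exp (-(θ * y)))) =
      Real.sqrt (θ / (2 * c)) * Real.exp (-(|x| * Real.sqrt (2 * θ / c))) := by
  have hpi := Real.pi_pos
  have hderiv : ∀ u ∈ Ioi (0:ℝ),
      HasDerivWithinAt (fun u : ℝ => u ^ 2) (2 * u) (Ioi 0) u := by
    intro u hu
    have h := (hasDerivAt_pow 2 u).hasDerivWithinAt (s := Ioi (0:ℝ))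
    exact h.congr_deriv (by norm_num)
  have hinj : InjOn (fun u : ℝ => u ^ 2) (Ioi 0) := by
    intro u1 h1 u2 h2 h
    have h1' : (0:ℝ) < u1 := h1
    have h2' : (0:ℝ) < u2 := h2
    simp only at h
    rw [← Real.sqrt_sq h1'.le, h, Real.sqrt_sq h2'.le]
  have hsub := integral_image_eq_integral_abs_deriv_smul measurableSet_Ioi hderiv hinj
    (fun y : ℝ => (2 * Real.pi * c * y) ^ (-(1 : ℝ) / 2) * Real.exp (-(x ^ 2) / (2 * c * y)) *
      (θ * Real.exp (-(θ * y))))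
  rw [sq_image] at hsub
  rw [hsub]
  have hcongr : ∫ u in Ioi (0:ℝ),
      |2 * u| • ((2 * Real.pi * c * u ^ 2) ^ (-(1 : ℝ) / 2) *
        Real.exp (-(x ^ 2) / (2 * c * u ^ 2)) * (θ * Real.exp (-(θ * u ^ 2))))
      = ∫ u in Ioi (0:ℝ), (2 * θ / Real.sqrt (2 * Real.pi * c)) *
          Real.exp (-((x ^ 2 / (2 * c)) / u ^ 2) - θ * u ^ 2) := by
    apply setIntegral_congr_fun measurableSet_Ioi
    intro u hu
    have hu' : (0:ℝ) < u := hu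
    have ht : (0:ℝ) < 2 * Real.pi * c * u ^ 2 := by positivity
    have hA : (2 * Real.pi * c * u ^ 2) ^ (-(1 : ℝ) / 2)
        = (Real.sqrt (2 * Real.pi * c) * u)⁻¹ := by
      rw [show (-(1:ℝ) / 2) = -(1 / 2) by norm_num, Real.rpow_neg ht.le, ← Real.sqrt_eq_rpow,
        show 2 * Real.pi * c * u ^ 2 = (2 * Real.pi * c) * u ^ 2 by ring,
        Real.sqrt_mul (by positivity), Real.sqrt_sq hu'.le]
    have hE : Real.exp (-((x ^ 2 / (2 * c)) / u ^ 2) - θ * u ^ 2)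
        = Real.exp (-(x ^ 2) / (2 * c * u ^ 2)) * Real.exp (-(θ * u ^ 2)) := by
      rw [← Real.exp_add]
      congr 1
      field_simp
      ring
    simp only [smul_eq_mul]
    rw [abs_of_pos (by positivity), hA, hE]
    have hs : (0:ℝ) < Real.sqrt (2 * Real.pi * c) := Real.sqrt_pos.mpr (by positivity)
    field_simp
  rw [hcongr, integral_const_mul, glasser (by positivity) hθ]
  have hexp : 2 * Real.sqrt (x ^ 2 / (2 * c) * θ) = |x| * Real.sqrt (2 * θ / c) := by
    have h1 : x ^ 2 / (2 * c) * θ = (|x| * Real.sqrt (2 * θ / c) / 2) ^ 2 := by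
      rw [div_pow, mul_pow, sq_abs, Real.sq_sqrt (by positivity)]
      field_simp
    rw [h1, Real.sqrt_sq (by positivity)]
    ring
  rw [← mul_assoc, hexp]
  congr 1
  have hsθ : Real.sqrt θ * Real.sqrt θ = θ := Real.mul_self_sqrt hθ.le
  rw [Real.sqrt_div Real.pi_pos.le θ, Real.sqrt_div hθ.le (2 * c),
    show 2 * Real.pi * c = Real.pi * (2 * c) by ring, Real.sqrt_mul Real.pi_pos.le]
  have h2c : (0:ℝ) < Real.sqrt (2 * c) := Real.sqrt_pos.mpr (by positivity)
  have hsp : (0:ℝ) < Real.sqrt Real.pi := Real.sqrt_pos.mpr hpi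
  have hst : (0:ℝ) < Real.sqrt θ := Real.sqrt_pos.mpr hθ
  have hsθ2 : Real.sqrt θ ^ 2 = θ := Real.sq_sqrt hθ.le
  field_simp
  linear_combination (-1 : ℝ) * hsθ2
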